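/- Let g:[0,1]^n → ℝ be twice continuously differentiable, and let H(w) denote its Hessian at w. Suppose K := max over w ∈ [0,1]^n and i ∈ [n] of |∑_{j≠i} H_{ij}(w)| is finite. Then for every coordinate i, the integrated gradient attribution ∫₀¹ ∂_i g(t·𝟏) dt differs from the marginal gain g(e_i) − g(0) by at most K/2, where e_i is the i-th standard basis vector and 𝟏 is the all-ones vector. -/

import Mathlib

/-- PIG vs marginal gain: the integrated gradient attribution of feature `i`
differs from the marginal gain `g(e_i) - g(0)` by at most `K/2`, where `K`
bounds the off-diagonal Hessian row sums on the cube `[0,1]^n`. -/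
theorem stmt_0 {n : ℕ} (g : (Fin n → ℝ) → ℝ) (hg : ContDiff ℝ 2 g)
    (H : (Fin n → ℝ) → Fin n → Fin n → ℝ)
    (hH : ∀ w i j, H w i j =
      fderiv ℝ (fun x => fderiv ℝ g x (Pi.single j 1)) w (Pi.single i 1))
    (K : ℝ)
    (hK : ∀ w ∈ Set.Icc (0 : Fin n → ℝ) 1, ∀ i : Fin n,
      |∑ j ∈ Finset.univ.erase i, H w i j| ≤ K)
    (i : Fin n) :
    |(∫ t in (0:ℝ)..1, fderiv ℝ g (fun _ => t) (Pi.single i 1)) -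
      (g (Pi.single i 1) - g 0)| ≤ K / 2 := by
  classical
  set e : Fin n → ℝ := Pi.single i 1 with he
  have hgd : Differentiable ℝ g := hg.differentiable (by norm_num)
  have hD : ContDiff ℝ 1 (fun x => fderiv ℝ g x) := hg.fderiv_right (by norm_num)
  have hDd : Differentiable ℝ (fun x => fderiv ℝ g x) := hD.differentiable (by norm_num)
  have hDc : Continuous (fun x => fderiv ℝ g x) := hD.continuous
  have hf''c : Continuous (fun x => fderiv ℝ (fun x => fderiv ℝ g x) x) :=
    hD.continuous_fderiv (by norm_num)
  have cont : ∀ c : Fin n → ℝ, Continuous (fun t : ℝ => fderiv ℝ g (t • c) e) := fun c =>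
    (hDc.comp (continuous_id.smul continuous_const)).clm_apply continuous_const
  have hKnonneg : 0 ≤ K :=
    le_trans (abs_nonneg _) (hK 0 ⟨le_refl _, fun k => zero_le_one⟩ i)
  have hsymm : ∀ w : Fin n → ℝ, IsSymmSndFDerivAt ℝ g w := fun w =>
    hg.contDiffAt.isSymmSndFDerivAt (by simp)
  have hH' : ∀ (w u v : Fin n → ℝ),
      fderiv ℝ (fun x => fderiv ℝ g x v) w u = fderiv ℝ (fun x => fderiv ℝ g x) w u v := by
    intro w u v
    have h1 : HasFDerivAt (fun x => fderiv ℝ g x v)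
        (((fderiv ℝ g w).comp (0 : (Fin n → ℝ) →L[ℝ] (Fin n → ℝ))) +
          (fderiv ℝ (fun x => fderiv ℝ g x) w).flip v) w :=
      (hDd w).hasFDerivAt.clm_apply (hasFDerivAt_const v w)
    rw [h1.fderiv]; simp
  have pathderiv : ∀ (c : Fin n → ℝ) (t : ℝ),
      HasDerivAt (fun t : ℝ => g (t • c)) (fderiv ℝ g (t • c) c) t := by
    intro c t
    have h1 : HasDerivAt (fun t : ℝ => t • c) c t := by
      simpa using (hasDerivAt_id t).smul_const c
    exact (hgd (t • c)).hasFDerivAt.comp_hasDerivAt t h1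
  have ftc1 : g e - g 0 = ∫ t in (0:ℝ)..1, fderiv ℝ g (t • e) e := by
    have := intervalIntegral.integral_eq_sub_of_hasDerivAt
      (f := fun t : ℝ => g (t • e)) (f' := fun t => fderiv ℝ g (t • e) e)
      (a := (0:ℝ)) (b := 1) (fun t _ => pathderiv e t) ((cont e).intervalIntegrable 0 1)
    simp at this
    rw [this]
  -- key pointwise bound
  have key : ∀ t ∈ Set.Ioc (0:ℝ) 1,
      |fderiv ℝ g (t • (1 : Fin n → ℝ)) e - fderiv ℝ g (t • e) e| ≤ K * t := by
    intro t ht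
    set v : Fin n → ℝ := t • ((1 : Fin n → ℝ) - e) with hv
    set p : ℝ → Fin n → ℝ := fun s => t • e + s • v with hp
    have hps : ∀ s : ℝ, HasDerivAt p v s := by
      intro s
      have h := (hasDerivAt_const s (t • e)).add ((hasDerivAt_id s).smul_const v)
      rw [zero_add, one_smul] at h
      exact h
    have hpc : Continuous p := continuous_const.add (continuous_id.smul continuous_const)
    have hmem : ∀ s ∈ Set.Ioc (0:ℝ) 1, p s ∈ Set.Icc (0 : Fin n → ℝ) 1 := by
      intro s hs
      rw [Set.mem_Icc]
      constructor <;> intro k <;>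
      · simp only [hp, hv, Pi.add_apply, Pi.smul_apply, Pi.sub_apply, Pi.one_apply,
          Pi.zero_apply, smul_eq_mul]
        rcases eq_or_ne k i with rfl | hk
        · simp only [he, Pi.single_eq_same]
          nlinarith [ht.1.le, ht.2, hs.1.le, hs.2]
        · simp only [he, Pi.single_eq_of_ne hk]
          nlinarith [ht.1.le, ht.2, hs.1.le, hs.2]
    have hds : ∀ s : ℝ, HasDerivAt (fun s => fderiv ℝ g (p s) e)
        (fderiv ℝ (fun x => fderiv ℝ g x) (p s) v e) s := by
      intro s
      have h2 : HasDerivAt (fun s => fderiv ℝ g (p s))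
          (fderiv ℝ (fun x => fderiv ℝ g x) (p s) v) s :=
        (hDd (p s)).hasFDerivAt.comp_hasDerivAt s (hps s)
      simpa using h2.clm_apply (hasDerivAt_const s e)
    have hcont : Continuous fun s => fderiv ℝ (fun x => fderiv ℝ g x) (p s) v e :=
      (((hf''c.comp hpc).clm_apply continuous_const).clm_apply continuous_const)
    have heq : fderiv ℝ g (t • (1 : Fin n → ℝ)) e - fderiv ℝ g (t • e) e
        = ∫ s in (0:ℝ)..1, fderiv ℝ (fun x => fderiv ℝ g x) (p s) v e := by
      have h3 := intervalIntegral.integral_eq_sub_of_hasDerivAt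
        (f := fun s => fderiv ℝ g (p s) e) (a := (0:ℝ)) (b := 1)
        (fun s _ => hds s) (hcont.intervalIntegrable 0 1)
      rw [h3]
      have hp1 : p 1 = t • (1 : Fin n → ℝ) := by
        simp only [hp, hv, one_smul, smul_sub]; abel
      have hp0 : p 0 = t • e := by simp [hp]
      simp only [hp1, hp0]
    have hterm : ∀ (w : Fin n → ℝ) (j : Fin n),
        fderiv ℝ (fun x => fderiv ℝ g x) w (Pi.single j 1) e = H w i j := by
      intro w j
      rw [hH, hH', he]
      exact hsymm w (Pi.single j 1) (Pi.single i 1)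
    have hone : (1 : Fin n → ℝ) - e = ∑ j ∈ Finset.univ.erase i, Pi.single j (1:ℝ) := by
      have h1 : (1 : Fin n → ℝ) = ∑ j : Fin n, Pi.single j (1:ℝ) := by
        funext k
        simp [Finset.sum_apply, Pi.single_apply]
      rw [← Finset.sum_erase_add _ _ (Finset.mem_univ i)] at h1
      rw [h1, he]
      abel
    have hval : ∀ s : ℝ, fderiv ℝ (fun x => fderiv ℝ g x) (p s) v e
        = t * ∑ j ∈ Finset.univ.erase i, H (p s) i j := by
      intro s
      rw [hv, hone, map_smul, map_sum]
      simp only [ContinuousLinearMap.smul_apply, ContinuousLinearMap.sum_apply,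
        smul_eq_mul, Finset.mul_sum]
      exact Finset.sum_congr rfl fun j _ => by rw [hterm]
    rw [heq]
    have hbnd : ∀ s ∈ Set.uIoc (0:ℝ) 1,
        ‖fderiv ℝ (fun x => fderiv ℝ g x) (p s) v e‖ ≤ K * t := by
      intro s hs
      rw [Set.uIoc_of_le zero_le_one] at hs
      rw [Real.norm_eq_abs, hval s, abs_mul, abs_of_pos ht.1, mul_comm]
      exact mul_le_mul_of_nonneg_right (hK (p s) (hmem s hs) i) ht.1.le
    have := intervalIntegral.norm_integral_le_of_norm_le_const_ae
      (f := fun s => fderiv ℝ (fun x => fderiv ℝ g x) (p s) v e) (C := K * t)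
      (Filter.Eventually.of_forall hbnd)
    simpa using this
  -- assemble
  have hint : (∫ t in (0:ℝ)..1, fderiv ℝ g (fun _ => t) e)
      = ∫ t in (0:ℝ)..1, fderiv ℝ g (t • (1 : Fin n → ℝ)) e := by
    refine intervalIntegral.integral_congr fun t _ => ?_
    have h4 : (fun _ : Fin n => t) = t • (1 : Fin n → ℝ) := by funext k; simp
    rw [h4]
  rw [hint, ftc1, ← intervalIntegral.integral_sub ((cont 1).intervalIntegrable 0 1)
    ((cont e).intervalIntegrable 0 1)]
  have hmain := intervalIntegral.norm_integral_le_of_norm_le (μ := MeasureTheory.volume)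
    (f := fun t => fderiv ℝ g (t • (1 : Fin n → ℝ)) e - fderiv ℝ g (t • e) e)
    (g := fun t => K * t) (a := 0) (b := 1) zero_le_one
    (by
      exact Filter.Eventually.of_forall fun t ht => by
        simpa [Real.norm_eq_abs] using key t ht)
    ((continuous_const.mul continuous_id).intervalIntegrable 0 1)
  have hcomp : (∫ t in (0:ℝ)..1, K * t) = K / 2 := by
    rw [intervalIntegral.integral_const_mul, integral_id]; ring
  rw [hcomp] at hmain
  simpa [Real.norm_eq_abs] using hmain
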